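/- Let b ∈ (0, +∞], let (H, φ) solve the EdGB FLRW system on [0, b), and suppose H(0) = β > 0 and H'(0) + 5β^2 > 0. Then H'(t) + 5·H(t)^2 > 0 for all t ∈ [0, b). -/

import Mathlib

/-- The EdGB FLRW system on a set `I ⊆ ℝ`: `H` is continuously differentiable and
`φ` twice continuously differentiable on `I`, and for every `t ∈ I` the Hamiltonian
constraint `3H² − 3e^φ φ' H³ = φ'²/2` and the scalar field equation
`φ'' = −3Hφ' − 3e^φ H²(H² + H')` hold. -/
def EdGB (H φ : ℝ → ℝ) (I : Set ℝ) : Prop :=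
  ContDiffOn ℝ 1 H I ∧ ContDiffOn ℝ 2 φ I ∧
  (∀ t ∈ I, 3 * H t ^ 2 - 3 * Real.exp (φ t) * deriv φ t * H t ^ 3 = (deriv φ t) ^ 2 / 2) ∧
  (∀ t ∈ I, deriv (deriv φ) t =
      -3 * H t * deriv φ t - 3 * Real.exp (φ t) * H t ^ 2 * (H t ^ 2 + deriv H t))

lemma edgb_alg (e h x d x2 : ℝ) (he : 0 < e) (hh : 0 < h)
    (hc : 3 * h ^ 2 - 3 * e * x * h ^ 3 = x ^ 2 / 2)
    (hfe : x2 = -3 * h * x - 3 * e * h ^ 2 * (h ^ 2 + d))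
    (hdc : 3 * (2 * h * d) -
        3 * ((e * x * x + e * x2) * h ^ 3 + e * x * (3 * h ^ 2 * d)) - 2 * x * x2 / 2 = 0) :
    0 < d + 5 * h ^ 2 := by
  subst hfe
  have hq : 6*h*d - 3*e*h^3*x^2 + 3*h*x^2 + 12*e*h^4*x + 9*e^2*h^5*(h^2+d) - 6*e*h^2*x*d = 0 := by
    linear_combination hdc
  have hx : x ≠ 0 := by
    intro hx0
    rw [hx0] at hc
    nlinarith
  have hx2 : 0 < x ^ 2 := by positivity
  have key : (d + 5*h^2) * ((2 - 2*e*h*x + 3*e^2*h^4) * (3*h*x^2))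
      = (36*h^4 - 24*h^2*x^2 + 5*x^4 + 3*e*h^2*x^4) * h := by
    linear_combination x^2 * hq + (16*h*x^2 - 12*h^3 - 12*e*h^4*x) * hc
  have hden1 : (2 - 2*e*h*x + 3*e^2*h^4) * (3*h^2) = x^2 + 9*e^2*h^6 := by
    linear_combination 2 * hc
  have hden : 0 < 2 - 2*e*h*x + 3*e^2*h^4 := by nlinarith [sq_nonneg (e*h^3)]
  have hdenfull : 0 < (2 - 2*e*h*x + 3*e^2*h^4) * (3*h*x^2) := by positivity
  have hx4 : 0 < x ^ 4 := by positivity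
  have he3 : 0 ≤ 3*e*h^2*x^4 := by positivity
  have hsum : 0 < 36*h^4 - 24*h^2*x^2 + 5*x^4 + 3*e*h^2*x^4 := by
    nlinarith [sq_nonneg (6*h^2 - 2*x^2), hx4, he3]
  have hrhs : 0 < (36*h^4 - 24*h^2*x^2 + 5*x^4 + 3*e*h^2*x^4) * h := mul_pos hsum hh
  nlinarith [key, hdenfull, hrhs]

/-- If `(H, φ)` solves the EdGB FLRW system on `[0, b)` (with `b ∈ (0, +∞]`),
`H(0) = β > 0` and `D₁(0) = H'(0) + 5β² > 0`, then `D₁(t) = H'(t) + 5H(t)² > 0`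
for all `t ∈ [0, b)`. -/
theorem stmt_5 (b : EReal) (hb : 0 < b) (β : ℝ) (hβ : 0 < β) (H φ : ℝ → ℝ)
    (hsys : EdGB H φ {t : ℝ | 0 ≤ t ∧ (t : EReal) < b})
    (h0 : H 0 = β) (hD0 : deriv H 0 + 5 * β ^ 2 > 0) :
    ∀ t : ℝ, 0 ≤ t → (t : EReal) < b → deriv H t + 5 * H t ^ 2 > 0 := by
  obtain ⟨hH, hφ, hcon, hfield⟩ := hsys
  set U : Set ℝ := Set.Ioi (0:ℝ) ∩ ((↑) : ℝ → EReal) ⁻¹' (Set.Iio b) with hU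
  have hUopen : IsOpen U := isOpen_Ioi.inter (isOpen_Iio.preimage continuous_coe_real_ereal)
  have hUI : U ⊆ {t : ℝ | 0 ≤ t ∧ (t : EReal) < b} := fun s hs => ⟨le_of_lt hs.1, hs.2⟩
  -- pointwise positivity of D₁ wherever H > 0
  have main : ∀ t ∈ U, 0 < H t → 0 < deriv H t + 5 * H t ^ 2 := by
    intro t ht hHt
    have hHU : ContDiffOn ℝ 1 H U := hH.mono hUI
    have hφU : ContDiffOn ℝ 2 φ U := hφ.mono hUI
    have hnhds : U ∈ nhds t := hUopen.mem_nhds ht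
    have hHd : HasDerivAt H (deriv H t) t :=
      ((hHU.differentiableOn one_ne_zero).differentiableAt hnhds).hasDerivAt
    have hφd : HasDerivAt φ (deriv φ t) t :=
      ((hφU.differentiableOn (by norm_num)).differentiableAt hnhds).hasDerivAt
    have hφ2U : ContDiffOn ℝ (1 + 1) φ U := hφU.of_le (by norm_num)
    have hφ1 : ContDiffOn ℝ 1 (deriv φ) U :=
      ((contDiffOn_succ_iff_deriv_of_isOpen hUopen).mp hφ2U).2.2
    have hφ2d : HasDerivAt (deriv φ) (deriv (deriv φ) t) t :=
      ((hφ1.differentiableOn one_ne_zero).differentiableAt hnhds).hasDerivAt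
    have hE : HasDerivAt (fun s => Real.exp (φ s)) (Real.exp (φ t) * deriv φ t) t := hφd.exp
    have hFd : HasDerivAt
        (fun s => 3 * H s ^ 2 - 3 * (Real.exp (φ s) * deriv φ s * H s ^ 3) - (deriv φ s) ^ 2 / 2)
        (3 * (2 * H t * deriv H t) -
          3 * ((Real.exp (φ t) * deriv φ t * deriv φ t + Real.exp (φ t) * deriv (deriv φ) t) * H t ^ 3
            + Real.exp (φ t) * deriv φ t * (3 * H t ^ 2 * deriv H t))
          - 2 * deriv φ t * deriv (deriv φ) t / 2) t := by
      have hA := (hHd.pow 2).const_mul (3:ℝ)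
      have hB := ((hE.mul hφ2d).mul (hHd.pow 3)).const_mul (3:ℝ)
      have hC := (hφ2d.pow 2).div_const (2:ℝ)
      have := (hA.sub hB).sub hC
      exact this.congr_deriv (by simp only [Pi.pow_apply, Pi.mul_apply]; norm_num)
    have hFzero : (fun s => 3 * H s ^ 2 - 3 * (Real.exp (φ s) * deriv φ s * H s ^ 3)
        - (deriv φ s) ^ 2 / 2) =ᶠ[nhds t] (fun _ => (0:ℝ)) := by
      filter_upwards [hnhds] with s hs
      have := hcon s (hUI hs)
      linear_combination this
    have hd0 : deriv (fun s => 3 * H s ^ 2 - 3 * (Real.exp (φ s) * deriv φ s * H s ^ 3)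
        - (deriv φ s) ^ 2 / 2) t = 0 := by
      rw [hFzero.deriv_eq]
      simp
    have heqn := hFd.deriv.symm.trans hd0
    exact edgb_alg (Real.exp (φ t)) (H t) (deriv φ t) (deriv H t) (deriv (deriv φ) t)
      (Real.exp_pos _) hHt (hcon t (hUI ht)) (hfield t (hUI ht)) heqn
  -- H stays positive
  have hpos : ∀ t : ℝ, 0 < t → (t : EReal) < b → 0 < H t := by
    intro t ht htb
    by_contra hle
    push_neg at hle
    have hIcc : Set.Icc 0 t ⊆ {t : ℝ | 0 ≤ t ∧ (t : EReal) < b} := by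
      intro s hs
      exact ⟨hs.1, lt_of_le_of_lt (EReal.coe_le_coe_iff.mpr hs.2) htb⟩
    have hHc : ContinuousOn H (Set.Icc 0 t) := hH.continuousOn.mono hIcc
    set A := Set.Icc 0 t ∩ H ⁻¹' Set.Iic 0 with hA
    have hAclosed : IsClosed A := hHc.preimage_isClosed_of_isClosed isClosed_Icc isClosed_Iic
    have hAne : A.Nonempty := ⟨t, ⟨le_of_lt ht, le_rfl⟩, hle⟩
    have hAbdd : BddBelow A := ⟨0, fun s hs => hs.1.1⟩
    set t₁ := sInf A with ht₁
    have ht₁A : t₁ ∈ A := hAclosed.csInf_mem hAne hAbdd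
    have ht₁0 : 0 < t₁ := by
      rcases lt_or_eq_of_le ht₁A.1.1 with h' | h'
      · exact h'
      · exfalso
        have h2 : H t₁ ≤ 0 := ht₁A.2
        rw [← h', h0] at h2
        linarith
    have hlt : ∀ s, 0 ≤ s → s < t₁ → 0 < H s := by
      intro s hs0 hst
      by_contra hHs
      push_neg at hHs
      have hsA : s ∈ A := ⟨⟨hs0, le_trans (le_of_lt hst) ht₁A.1.2⟩, hHs⟩
      exact absurd (csInf_le hAbdd hsA) (not_le.mpr hst)
    set a := t₁ / 2 with ha
    have ha0 : 0 < a := by positivity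
    have hat : a < t₁ := by linarith
    have hmemU : ∀ u, 0 < u → u < t₁ → u ∈ U := by
      intro u hu hut
      refine ⟨hu, ?_⟩
      have h1 : (u : EReal) ≤ (t : EReal) :=
        EReal.coe_le_coe_iff.mpr (le_trans (le_of_lt hut) ht₁A.1.2)
      exact lt_of_le_of_lt h1 htb
    set g : ℝ → ℝ := fun u => 5 * u - (H u)⁻¹ with hg
    have hgd : ∀ u, 0 < u → u < t₁ →
        HasDerivAt g (5 * 1 - -deriv H u / H u ^ 2) u := by
      intro u hu hut
      have hU' := hmemU u hu hut
      have hHd : HasDerivAt H (deriv H u) u :=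
        (((hH.mono hUI).differentiableOn one_ne_zero).differentiableAt
          (hUopen.mem_nhds hU')).hasDerivAt
      have hne : H u ≠ 0 := (hlt u hu.le hut).ne'
      exact ((hasDerivAt_id u).const_mul (5:ℝ)).sub (hHd.inv hne)
    have hgdpos : ∀ u, 0 < u → u < t₁ → 0 < 5 * 1 - -deriv H u / H u ^ 2 := by
      intro u hu hut
      have hHu := hlt u hu.le hut
      have hD := main u (hmemU u hu hut) hHu
      have h2 : (0:ℝ) < H u ^ 2 := by positivity
      have h3 : -deriv H u / H u ^ 2 < 5 := by
        rw [div_lt_iff₀ h2]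
        nlinarith
      linarith
    have hgmono : StrictMonoOn g (Set.Ico a t₁) := by
      apply strictMonoOn_of_deriv_pos (convex_Ico a t₁)
      · intro u hu
        exact ((hgd u (lt_of_lt_of_le ha0 hu.1) hu.2).continuousAt).continuousWithinAt
      · intro u hu
        rw [interior_Ico] at hu
        have hu0 : 0 < u := lt_trans ha0 hu.1
        rw [(hgd u hu0 hu.2).deriv]
        exact hgdpos u hu0 hu.2
    have hHa : 0 < H a := hlt a ha0.le hat
    set C := (H a)⁻¹ + 5 * t₁ with hC
    have hCpos : 0 < C := by positivity
    have hbound : ∀ u ∈ Set.Ico a t₁, C⁻¹ ≤ H u := by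
      intro u hu
      have hHu : 0 < H u := hlt u (le_trans ha0.le hu.1) hu.2
      have hga : g a ≤ g u := by
        rcases eq_or_lt_of_le hu.1 with h' | h'
        · rw [h']
        · exact le_of_lt (hgmono ⟨le_refl a, hat⟩ hu h')
      have h1 : (H u)⁻¹ ≤ C := by
        simp only [hg, hC] at hga ⊢
        have : u ≤ t₁ := hu.2.le
        have ha' : 0 ≤ a := ha0.le
        nlinarith [hga]
      calc C⁻¹ ≤ ((H u)⁻¹)⁻¹ := by
            apply inv_anti₀ (inv_pos.mpr hHu) h1
        _ = H u := inv_inv _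
    have htend : Filter.Tendsto H (nhdsWithin t₁ (Set.Ico a t₁)) (nhds (H t₁)) := by
      have hc1 : ContinuousWithinAt H (Set.Icc 0 t) t₁ := hHc.continuousWithinAt ht₁A.1
      have hsub : Set.Ico a t₁ ⊆ Set.Icc 0 t := fun u hu =>
        ⟨le_trans ha0.le hu.1, le_trans hu.2.le ht₁A.1.2⟩
      exact (hc1.mono hsub).tendsto
    have hNeBot : (nhdsWithin t₁ (Set.Ico a t₁)).NeBot := by
      apply mem_closure_iff_nhdsWithin_neBot.mp
      rw [closure_Ico (ne_of_lt hat)]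
      exact ⟨le_of_lt hat, le_rfl⟩
    have hfin : C⁻¹ ≤ H t₁ :=
      ge_of_tendsto htend (Filter.eventually_of_mem self_mem_nhdsWithin
        (fun u hu => hbound u hu))
    have hp : 0 < H t₁ := lt_of_lt_of_le (inv_pos.mpr hCpos) hfin
    have hn : H t₁ ≤ 0 := ht₁A.2
    linarith
  intro t ht htb
  rcases eq_or_lt_of_le ht with h' | h'
  · rw [← h', h0]
    exact hD0
  · exact main t ⟨h', htb⟩ (hpos t h' htb)
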